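/- Let A be a simple D-module algebra. Then the R-linear map β : A ⊗_{A^D} A → Hom_R(D, A) defined by β(a ⊗ b)(d) = a·(d·b) is injective; that is, if a_1,…,a_n, b_1,…,b_n ∈ A satisfy Σ_i a_i·(d·b_i) = 0 for every d ∈ D, then Σ_i a_i ⊗ b_i = 0 in A ⊗_{A^D} A. -/

import Mathlib

open scoped TensorProduct

noncomputable section

variable (R D A : Type*) [Field R] [Ring D] [Bialgebra R D]
  [CommRing A] [Algebra R A] [Module D A] [IsScalarTower R D A]

def measureAux (a b : A) : D ⊗[R] D →ₗ[R] A :=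
  TensorProduct.lift <| LinearMap.mk₂ R (fun d e => (d • a) * (e • b))
    (fun d d' e => by
      show ((d + d') • a) * (e • b) = (d • a) * (e • b) + (d' • a) * (e • b)
      rw [add_smul, add_mul])
    (fun r d e => by
      show ((r • d) • a) * (e • b) = r • ((d • a) * (e • b))
      rw [smul_assoc, smul_mul_assoc])
    (fun d e e' => by
      show (d • a) * ((e + e') • b) = (d • a) * (e • b) + (d • a) * (e' • b)
      rw [add_smul, mul_add])
    (fun r d e => by
      show (d • a) * ((r • e) • b) = r • ((d • a) * (e • b))
      rw [smul_assoc, mul_smul_comm])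

lemma smul_comm_RD (d : D) (r : R) (x : A) : d • (r • x) = r • (d • x) := by
  rw [← algebraMap_smul D r x, ← mul_smul, ← Algebra.commutes, mul_smul, algebraMap_smul]

/-- the action on a fixed element, as an `R`-linear map `D →ₗ[R] A`. -/
def actL (x : A) : D →ₗ[R] A where
  toFun d := d • x
  map_add' d e := add_smul d e x
  map_smul' r d := smul_assoc r d x

lemma smul_mul_const
    (hmul : ∀ (d : D) (a b : A),
      d • (a * b) = measureAux R D A a b (Coalgebra.comul (R := R) d))
    {k : A} (hk : ∀ d : D, d • k = (Coalgebra.counit (R := R) d) • k)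
    (x : A) (d : D) : d • (k * x) = k * (d • x) := by
  rw [hmul]
  have key : measureAux R D A k x = (LinearMap.mulLeft R k) ∘ₗ (actL R D A x) ∘ₗ
      (TensorProduct.lid R D).toLinearMap ∘ₗ
      (LinearMap.rTensor D (Coalgebra.counit (R := R))) := by
    apply TensorProduct.ext'
    intro e f
    simp only [measureAux, TensorProduct.lift.tmul, LinearMap.mk₂_apply, LinearMap.comp_apply,
      LinearMap.rTensor_tmul, TensorProduct.lid_tmul, LinearEquiv.coe_coe,
      LinearMap.mulLeft_apply, actL, LinearMap.coe_mk, AddHom.coe_mk]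
    rw [hk e]
    calc (Coalgebra.counit (R := R) e • k) * (f • x)
        = Coalgebra.counit (R := R) e • (k * (f • x)) := smul_mul_assoc _ _ _
      _ = k * (Coalgebra.counit (R := R) e • (f • x)) := (mul_smul_comm _ _ _).symm
      _ = k * ((Coalgebra.counit (R := R) e • f) • x) := by rw [smul_assoc]
  rw [key]
  simp only [LinearMap.comp_apply, Coalgebra.rTensor_counit_comul, LinearEquiv.coe_coe,
    TensorProduct.lid_tmul, one_smul, LinearMap.mulLeft_apply]
  simp [actL]

/-- The subalgebra `A^D` of constants of a `D`-module algebra. -/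
def constants
    (hone : ∀ d : D, d • (1 : A) = (Coalgebra.counit (R := R) d) • (1 : A))
    (hmul : ∀ (d : D) (a b : A),
      d • (a * b) = measureAux R D A a b (Coalgebra.comul (R := R) d)) :
    Subalgebra R A where
  carrier := {a | ∀ d : D, d • a = (Coalgebra.counit (R := R) d) • a}
  add_mem' := by
    intro a b ha hb d
    rw [smul_add, ha d, hb d, smul_add]
  mul_mem' := by
    intro a b ha hb d
    rw [hmul]
    have key : measureAux R D A a b =
        LinearMap.smulRight ((LinearMap.mul' R R).comp
          (TensorProduct.map (Coalgebra.counit (R := R)) (Coalgebra.counit (R := R)))) (a * b) := by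
      apply TensorProduct.ext'
      intro x y
      simp only [measureAux, TensorProduct.lift.tmul, LinearMap.mk₂_apply,
        LinearMap.smulRight_apply, LinearMap.comp_apply, TensorProduct.map_tmul,
        LinearMap.mul'_apply]
      rw [ha x, hb y, smul_mul_assoc, mul_smul_comm, smul_smul]
    rw [key]
    simp only [LinearMap.smulRight_apply, LinearMap.comp_apply]
    congr 1
    rw [← LinearMap.rTensor_comp_lTensor, LinearMap.comp_apply,
      Coalgebra.lTensor_counit_comul (R := R) d, LinearMap.rTensor_tmul,
      LinearMap.mul'_apply, mul_one]
  algebraMap_mem' := by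
    intro r d
    rw [Algebra.algebraMap_eq_smul_one, smul_comm_RD, hone d, smul_comm]

lemma mem_constants
    (hone : ∀ d : D, d • (1 : A) = (Coalgebra.counit (R := R) d) • (1 : A))
    (hmul : ∀ (d : D) (a b : A),
      d • (a * b) = measureAux R D A a b (Coalgebra.comul (R := R) d))
    {x : A} :
    x ∈ constants R D A hone hmul ↔
      ∀ d : D, d • x = (Coalgebra.counit (R := R) d) • x := Iff.rfl

lemma constants_isField
    (hone : ∀ d : D, d • (1 : A) = (Coalgebra.counit (R := R) d) • (1 : A))
    (hmul : ∀ (d : D) (a b : A),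
      d • (a * b) = measureAux R D A a b (Coalgebra.comul (R := R) d))
    (hnt : Nontrivial A)
    (hsimple : ∀ I : Ideal A, (∀ d : D, ∀ a ∈ I, d • a ∈ I) → I = ⊥ ∨ I = ⊤) :
    IsField (constants R D A hone hmul) := by
  refine ⟨⟨0, 1, fun h => ?_⟩, mul_comm, ?_⟩
  · exact zero_ne_one (α := A) (congrArg Subtype.val h)
  · intro k hk
    have hkv : (k : A) ≠ 0 := fun h => hk (Subtype.ext h)
    have hkc : ∀ d : D, d • (k : A) = (Coalgebra.counit (R := R) d) • (k : A) := k.2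
    -- the annihilator of k is a D-stable ideal
    set Ann : Ideal A :=
      { carrier := {x | (k : A) * x = 0}
        add_mem' := fun {x y} hx hy => by
          simp only [Set.mem_setOf_eq] at *
          rw [mul_add, hx, hy, add_zero]
        zero_mem' := mul_zero _
        smul_mem' := fun c x hx => by
          simp only [Set.mem_setOf_eq, smul_eq_mul] at *
          rw [mul_left_comm, hx, mul_zero] } with hAnnDef
    have hAnnMem : ∀ x : A, x ∈ Ann ↔ (k : A) * x = 0 := fun x => Iff.rfl
    have hAnnStab : ∀ d : D, ∀ x ∈ Ann, d • x ∈ Ann := by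
      intro d x hx
      rw [hAnnMem] at *
      rw [← smul_mul_const R D A hmul hkc, hx, smul_zero]
    have hAnn : Ann = ⊥ := by
      rcases hsimple Ann hAnnStab with h | h
      · exact h
      · exfalso
        have h1 : (1 : A) ∈ Ann := h ▸ Submodule.mem_top
        rw [hAnnMem, mul_one] at h1
        exact hkv h1
    -- the ideal generated by k is D-stable
    have hSpanStab : ∀ d : D, ∀ x ∈ Ideal.span {(k : A)}, d • x ∈ Ideal.span {(k : A)} := by
      intro d x hx
      rw [Ideal.mem_span_singleton'] at *
      obtain ⟨y, rfl⟩ := hx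
      refine ⟨d • y, ?_⟩
      rw [mul_comm y, smul_mul_const R D A hmul hkc, mul_comm]
    obtain ⟨y, hy⟩ : ∃ y : A, (k : A) * y = 1 := by
      rcases hsimple _ hSpanStab with h | h
      · exfalso
        have : (k : A) ∈ Ideal.span {(k : A)} := Ideal.mem_span_singleton_self _
        rw [h, Submodule.mem_bot] at this
        exact hkv this
      · have h1 : (1 : A) ∈ Ideal.span {(k : A)} := h ▸ Submodule.mem_top
        rw [Ideal.mem_span_singleton'] at h1
        obtain ⟨y, hy⟩ := h1
        exact ⟨y, by rw [mul_comm]; exact hy⟩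
    have hyc : ∀ d : D, d • y = (Coalgebra.counit (R := R) d) • y := by
      intro d
      have h2 : (k : A) * (d • y - (Coalgebra.counit (R := R) d) • y) = 0 := by
        rw [mul_sub, ← smul_mul_const R D A hmul hkc, hy, mul_smul_comm, hy, hone d, sub_self]
      have h3 : (d • y - (Coalgebra.counit (R := R) d) • y) ∈ Ann := h2
      rw [hAnn, Submodule.mem_bot] at h3
      exact sub_eq_zero.mp h3
    exact ⟨⟨y, hyc⟩, Subtype.ext hy⟩

lemma tensor_coeff_zero {K M : Type*} [Field K] [AddCommGroup M] [Module K M]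
    {m : ℕ} {a : Fin m → M} (li : LinearIndependent K a) (x : Fin m → M)
    (h : ∑ i, a i ⊗ₜ[K] x i = (0 : M ⊗[K] M)) : ∀ j, x j = 0 := by
  intro j
  obtain ⟨q, hq⟩ := Submodule.exists_isCompl (Submodule.span K (Set.range a))
  set Bs := Module.Basis.span li with hBs
  set π := Submodule.projectionOnto _ q hq with hπ
  set g : M →ₗ[K] K := (Bs.coord j) ∘ₗ π with hg
  have hga : ∀ i, g (a i) = if i = j then 1 else 0 := by
    intro i
    have h1 : π (a i) = Bs i := by
      have h2 := Submodule.projectionOnto_apply_left hq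
        (⟨a i, Submodule.subset_span (Set.mem_range_self i)⟩ : Submodule.span K (Set.range a))
      rw [hπ, h2]
      exact (Module.Basis.span_apply li i).symm
    rw [hg, LinearMap.comp_apply, h1, Module.Basis.coord_apply, Module.Basis.repr_self, Finsupp.single_apply]
  have h3 := congrArg (fun z => (TensorProduct.lid K M) ((LinearMap.rTensor M g) z)) h
  simp only [map_sum, LinearMap.rTensor_tmul, TensorProduct.lid_tmul, map_zero] at h3
  rw [Finset.sum_congr rfl (fun i _ => by rw [hga i])] at h3
  simpa using h3

lemma main_aux
    (hone : ∀ d : D, d • (1 : A) = (Coalgebra.counit (R := R) d) • (1 : A))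
    (hmul : ∀ (d : D) (a b : A),
      d • (a * b) = measureAux R D A a b (Coalgebra.comul (R := R) d))
    (hnt : Nontrivial A)
    (hsimple : ∀ I : Ideal A, (∀ d : D, ∀ a ∈ I, d • a ∈ I) → I = ⊥ ∨ I = ⊤) :
    ∀ n : ℕ, ∀ a b : Fin n → A, (∀ d : D, ∑ i, a i * (d • b i) = 0) →
    ∑ i, (a i) ⊗ₜ[constants R D A hone hmul] (b i) =
      (0 : A ⊗[constants R D A hone hmul] A) := by
  intro n
  induction n using Nat.strong_induction_on with
  | _ n IH =>
  intro a b h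
  letI : Field (constants R D A hone hmul) :=
    (constants_isField R D A hone hmul hnt hsimple).toField
  by_cases li : LinearIndependent (constants R D A hone hmul) a
  · -- independent case: every `b j` is zero
    have hbz : ∀ j, b j = 0 := by
      intro j
      obtain ⟨m, rfl⟩ : ∃ m, n = m + 1 := ⟨n - 1, (Nat.succ_pred_eq_of_pos j.pos).symm⟩
      set J : Ideal A :=
        { carrier := {c | ∃ c' : Fin (m + 1) → A, c' j = c ∧
            ∀ d : D, ∑ i, a i * (d • c' i) = 0}
          zero_mem' := ⟨0, rfl, fun d => by simp⟩
          add_mem' := by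
            rintro x y ⟨cx, hcx1, hcx2⟩ ⟨cy, hcy1, hcy2⟩
            refine ⟨cx + cy, by rw [Pi.add_apply, hcx1, hcy1], fun d => ?_⟩
            simp only [Pi.add_apply, smul_add, mul_add, Finset.sum_add_distrib, hcx2 d, hcy2 d,
              add_zero]
          smul_mem' := by
            rintro x c ⟨c', hc1, hc2⟩
            refine ⟨fun i => x * c' i, by show x * c' j = x • c; rw [hc1, smul_eq_mul],
              fun d => ?_⟩
            have hΦ : (∑ i, (LinearMap.mulLeft R (a i)) ∘ₗ (measureAux R D A x (c' i)) :
                D ⊗[R] D →ₗ[R] A) = 0 := by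
              apply TensorProduct.ext'
              intro e f
              simp only [LinearMap.sum_apply, LinearMap.comp_apply, measureAux,
                TensorProduct.lift.tmul, LinearMap.mk₂_apply, LinearMap.mulLeft_apply,
                LinearMap.zero_apply]
              calc ∑ i, a i * ((e • x) * (f • c' i))
                  = (e • x) * ∑ i, a i * (f • c' i) := by
                    rw [Finset.mul_sum]
                    exact Finset.sum_congr rfl fun i _ => mul_left_comm _ _ _
                _ = 0 := by rw [hc2 f, mul_zero]
            have h4 := congrArg (fun φ : D ⊗[R] D →ₗ[R] A => φ (Coalgebra.comul (R := R) d)) hΦ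
            simp only [LinearMap.sum_apply, LinearMap.comp_apply, LinearMap.mulLeft_apply,
              LinearMap.zero_apply] at h4
            calc ∑ i, a i * (d • (x * c' i))
                = ∑ i, a i * ((measureAux R D A x (c' i)) (Coalgebra.comul (R := R) d)) :=
                  Finset.sum_congr rfl fun i _ => by rw [hmul]
              _ = 0 := h4 } with hJdef
      have hJstab : ∀ d : D, ∀ c ∈ J, d • c ∈ J := by
        rintro d c ⟨c', h1, h2⟩
        refine ⟨fun i => d • c' i, by show d • c' j = d • c; rw [h1], fun e => ?_⟩
        simp only [← mul_smul]
        exact h2 (e * d)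
      rcases hsimple J hJstab with hbot | htop
      · have hbJ : b j ∈ J := ⟨b, rfl, h⟩
        rw [hbot, Submodule.mem_bot] at hbJ
        exact hbJ
      · exfalso
        obtain ⟨c', hcj, hc⟩ : (1 : A) ∈ J := htop ▸ Submodule.mem_top
        have hconst : ∀ (i : Fin (m + 1)) (d : D),
            d • c' i = (Coalgebra.counit (R := R) d) • c' i := by
          intro i d
          set x : Fin (m + 1) → A :=
            fun i => d • c' i - (Coalgebra.counit (R := R) d) • c' i with hx
          have hxj : x j = 0 := by
            simp only [hx]
            rw [hcj, hone d, sub_self]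
          have hsum : ∀ e : D,
              ∑ i2 : Fin m, (a ∘ j.succAbove) i2 * (e • (x ∘ j.succAbove) i2) = 0 := by
            intro e
            have hall : ∀ i2 : Fin (m + 1), a i2 * (e • x i2)
                = a i2 * ((e * d) • c' i2)
                  - (Coalgebra.counit (R := R) d) • (a i2 * (e • c' i2)) := by
              intro i2
              simp only [hx]
              calc a i2 * (e • (d • c' i2 - (Coalgebra.counit (R := R) d) • c' i2))
                  = a i2 * (e • (d • c' i2))
                    - a i2 * (e • ((Coalgebra.counit (R := R) d) • c' i2)) := by
                    rw [smul_sub, mul_sub]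
                _ = a i2 * ((e * d) • c' i2)
                    - (Coalgebra.counit (R := R) d) • (a i2 * (e • c' i2)) := by
                    rw [← mul_smul, smul_comm_RD,
                      mul_smul_comm (Coalgebra.counit (R := R) d)]
            have htot : ∑ i2, a i2 * (e • x i2) = 0 := by
              rw [Finset.sum_congr rfl (fun i2 _ => hall i2), Finset.sum_sub_distrib,
                hc (e * d), ← Finset.smul_sum, hc e, smul_zero, sub_zero]
            rw [Fin.sum_univ_succAbove (fun i2 => a i2 * (e • x i2)) j, hxj, smul_zero,
              mul_zero, zero_add] at htot
            exact htot
          have hten := IH m (Nat.lt_succ_self m) (a ∘ j.succAbove) (x ∘ j.succAbove) hsum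
          have hli2 : LinearIndependent (constants R D A hone hmul) (a ∘ j.succAbove) :=
            li.comp _ Fin.succAbove_right_injective
          have hz := tensor_coeff_zero hli2 (x ∘ j.succAbove) hten
          have hxall : x i = 0 := by
            by_cases hij : i = j
            · rw [hij]; exact hxj
            · obtain ⟨i2, rfl⟩ := Fin.exists_succAbove_eq hij
              exact hz i2
          exact sub_eq_zero.mp hxall
        have hKmem : ∀ i, c' i ∈ constants R D A hone hmul := fun i => hconst i
        have h1A : ∑ i, a i * c' i = 0 := by
          have := hc 1
          simpa only [one_smul] using this
        have hcomb : ∑ i, (⟨c' i, hKmem i⟩ : constants R D A hone hmul) • a i = 0 := by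
          rw [← h1A]
          exact Finset.sum_congr rfl fun i _ => by
            rw [Subalgebra.smul_def, smul_eq_mul, mul_comm]
        have hall0 := Fintype.linearIndependent_iff.mp li
          (fun i => (⟨c' i, hKmem i⟩ : constants R D A hone hmul)) hcomb j
        have hc0 : c' j = 0 := congrArg Subtype.val hall0
        rw [hcj] at hc0
        exact one_ne_zero hc0
    rw [Finset.sum_congr rfl (fun i _ => by rw [hbz i, TensorProduct.tmul_zero])]
    exact Finset.sum_const_zero
  · -- dependent case: reduce the length by one
    obtain ⟨g, hg0, j, hgj⟩ := Fintype.not_linearIndependent_iff.mp li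
    obtain ⟨m, rfl⟩ : ∃ m, n = m + 1 := ⟨n - 1, (Nat.succ_pred_eq_of_pos j.pos).symm⟩
    set k : Fin (m + 1) → constants R D A hone hmul := fun i => (g j)⁻¹ * g i with hk
    have hkj : k j = 1 := inv_mul_cancel₀ hgj
    have hksum : ∑ i, k i • a i = 0 := by
      simp only [hk, mul_smul, ← Finset.smul_sum, hg0, smul_zero]
    have haj : a j = - ∑ i : Fin m, (k (j.succAbove i)) • a (j.succAbove i) := by
      rw [Fin.sum_univ_succAbove (fun i => k i • a i) j, hkj, one_smul] at hksum
      exact eq_neg_of_add_eq_zero_left hksum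
    set b' : Fin m → A := fun i => b (j.succAbove i) - (k (j.succAbove i)) • b j with hb'def
    have hb' : ∀ d : D, ∑ i : Fin m, (a ∘ j.succAbove) i * (d • b' i) = 0 := by
      intro d
      have expand : ∀ i : Fin m, (a ∘ j.succAbove) i * (d • b' i)
          = a (j.succAbove i) * (d • b (j.succAbove i))
            - (k (j.succAbove i) • a (j.succAbove i)) * (d • b j) := by
        intro i
        simp only [hb'def, Function.comp_apply]
        rw [smul_sub, mul_sub]
        congr 1
        rw [Subalgebra.smul_def (k (j.succAbove i)) (b j),
          smul_eq_mul,
          smul_mul_const R D A hmul (k (j.succAbove i)).2 (b j) d,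
          Subalgebra.smul_def (k (j.succAbove i)) (a (j.succAbove i)), smul_eq_mul]
        ring
      rw [Finset.sum_congr rfl (fun i _ => expand i), Finset.sum_sub_distrib, ← Finset.sum_mul]
      have hd := h d
      rw [Fin.sum_univ_succAbove (fun i => a i * (d • b i)) j] at hd
      have hsA : ∑ i : Fin m, k (j.succAbove i) • a (j.succAbove i) = - a j := by
        rw [haj, neg_neg]
      rw [hsA]
      have hrest : ∑ i : Fin m, a (j.succAbove i) * (d • b (j.succAbove i))
          = - (a j * (d • b j)) := by
        exact eq_neg_of_add_eq_zero_right hd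
      rw [hrest]
      ring
    have hten := IH m (Nat.lt_succ_self m) (a ∘ j.succAbove) b' hb'
    have hswap : ∀ (u v : A) (c : constants R D A hone hmul),
        (c • u) ⊗ₜ[constants R D A hone hmul] v
          = u ⊗ₜ[constants R D A hone hmul] (c • v) := by
      intro u v c
      have h1 : (TensorProduct.mk (constants R D A hone hmul) A A u) (c • v)
          = c • ((TensorProduct.mk (constants R D A hone hmul) A A u) v) := map_smul _ c v
      simp only [TensorProduct.mk_apply] at h1
      rw [h1]; exact (TensorProduct.smul_tmul' c u v).symm
    rw [Fin.sum_univ_succAbove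
      (fun i => (a i) ⊗ₜ[constants R D A hone hmul] (b i)) j]
    have hsplit : ∀ i : Fin m,
        a (j.succAbove i) ⊗ₜ[constants R D A hone hmul] b (j.succAbove i)
        = (a ∘ j.succAbove) i ⊗ₜ[constants R D A hone hmul] b' i
          + (k (j.succAbove i) • a (j.succAbove i)) ⊗ₜ[constants R D A hone hmul] b j := by
      intro i
      simp only [hb'def, Function.comp_apply]
      rw [TensorProduct.tmul_sub, hswap, sub_add_cancel]
    rw [Finset.sum_congr rfl (fun i _ => hsplit i), Finset.sum_add_distrib, hten, zero_add,
      ← TensorProduct.sum_tmul, haj, ← TensorProduct.add_tmul, neg_add_cancel,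
      TensorProduct.zero_tmul]

/-- For a simple `D`-module algebra `A`, the map
`β : A ⊗_{A^D} A → Hom_R(D,A)`, `β(a ⊗ b)(d) = a (d • b)`, is injective:
if `Σᵢ aᵢ (d • bᵢ) = 0` for every `d ∈ D`, then `Σᵢ aᵢ ⊗ bᵢ = 0` in `A ⊗_{A^D} A`. -/
theorem tensor_eq_zero_of_forall_eval_eq_zero
    (hone : ∀ d : D, d • (1 : A) = (Coalgebra.counit (R := R) d) • (1 : A))
    (hmul : ∀ (d : D) (a b : A),
      d • (a * b) = measureAux R D A a b (Coalgebra.comul (R := R) d))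
    (hnt : Nontrivial A)
    (hsimple : ∀ I : Ideal A, (∀ d : D, ∀ a ∈ I, d • a ∈ I) → I = ⊥ ∨ I = ⊤)
    (n : ℕ) (a b : Fin n → A)
    (h : ∀ d : D, ∑ i, a i * (d • b i) = 0) :
    ∑ i, (a i) ⊗ₜ[constants R D A hone hmul] (b i) =
      (0 : A ⊗[constants R D A hone hmul] A) :=
  main_aux R D A hone hmul hnt hsimple n a b h
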